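/- Under the hypotheses of the reduction theorem, if in addition f̄ : ℝ → ℝ is strictly convex and the quadratic problem over C has a unique minimizer, then for variables in ℝⁿ the unique minimizer of ∑ᵢ aᵢ·f̄(xᵢ/aᵢ + bᵢ) over C coincides with the minimizer of ∑ᵢ aᵢ·f(xᵢ/aᵢ + bᵢ) over C for any convex f: the minimizer of the strictly convex (a,b,f̄)-separable problem is also a minimizer of the (a,b,f)-separable problem. -/

import Mathlib

open Set Filter

/-- Left derivative of `g` at `x`. -/
noncomputable def leftDeriv (g : ℝ → ℝ) (x : ℝ) : ℝ := derivWithin g (Set.Iio x) x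

/-- Right derivative of `g` at `x`. -/
noncomputable def rightDeriv (g : ℝ → ℝ) (x : ℝ) : ℝ := derivWithin g (Set.Ioi x) x

/-- `(i,k)` is an exchangeable pair at `x ∈ C`. -/
def ExchPair {n : ℕ} (C : Set (Fin n → ℝ)) (x : Fin n → ℝ) (i k : Fin n) : Prop :=
  i ≠ k ∧ ∃ ε : ℝ, 0 < ε ∧ x + ε • (Pi.single k 1 - Pi.single i 1) ∈ C

lemma ConvexOn.hasDerivWithinAt_Iio' {g : ℝ → ℝ} (hg : ConvexOn ℝ univ g) (x : ℝ) :
    HasDerivWithinAt g (sSup (slope g x '' Iio x)) (Iio x) x := by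
  have hmono : MonotoneOn (slope g x) (Iio x) :=
    (hg.slope_mono (mem_univ x)).mono (fun y hy => ⟨mem_univ y, ne_of_lt hy⟩)
  have hbdd : BddAbove (slope g x '' Iio x) := by
    refine ⟨slope g x (x + 1), ?_⟩
    rintro _ ⟨y, hy, rfl⟩
    exact (hg.slope_mono (mem_univ x)) ⟨mem_univ y, ne_of_lt hy⟩
      ⟨mem_univ _, by norm_num⟩ (by linarith [mem_Iio.mp hy])
  rw [hasDerivWithinAt_iff_tendsto_slope' (notMem_Iio_self)]
  exact hmono.tendsto_nhdsLT hbdd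

lemma ConvexOn.hasDerivWithinAt_Ioi' {g : ℝ → ℝ} (hg : ConvexOn ℝ univ g) (x : ℝ) :
    HasDerivWithinAt g (sInf (slope g x '' Ioi x)) (Ioi x) x := by
  have hmono : MonotoneOn (slope g x) (Ioi x) :=
    (hg.slope_mono (mem_univ x)).mono (fun y hy => ⟨mem_univ y, ne_of_gt hy⟩)
  have hbdd : BddBelow (slope g x '' Ioi x) := by
    refine ⟨slope g x (x - 1), ?_⟩
    rintro _ ⟨y, hy, rfl⟩
    exact (hg.slope_mono (mem_univ x)) ⟨mem_univ _, by norm_num⟩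
      ⟨mem_univ y, ne_of_gt hy⟩ (by linarith [mem_Ioi.mp hy])
  rw [hasDerivWithinAt_iff_tendsto_slope' (notMem_Ioi_self)]
  exact hmono.tendsto_nhdsGT hbdd

lemma ConvexOn.diffWithin_Iio {g : ℝ → ℝ} (hg : ConvexOn ℝ univ g) (x : ℝ) :
    DifferentiableWithinAt ℝ g (Iio x) x :=
  (hg.hasDerivWithinAt_Iio' x).differentiableWithinAt

lemma ConvexOn.diffWithin_Ioi {g : ℝ → ℝ} (hg : ConvexOn ℝ univ g) (x : ℝ) :
    DifferentiableWithinAt ℝ g (Ioi x) x :=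
  (hg.hasDerivWithinAt_Ioi' x).differentiableWithinAt

lemma ConvexOn.hasLeftDeriv {g : ℝ → ℝ} (hg : ConvexOn ℝ univ g) (x : ℝ) :
    HasDerivWithinAt g (leftDeriv g x) (Iio x) x :=
  (hg.diffWithin_Iio x).hasDerivWithinAt

lemma ConvexOn.hasRightDeriv {g : ℝ → ℝ} (hg : ConvexOn ℝ univ g) (x : ℝ) :
    HasDerivWithinAt g (rightDeriv g x) (Ioi x) x :=
  (hg.diffWithin_Ioi x).hasDerivWithinAt

lemma ConvexOn.leftDeriv_le_slope' {g : ℝ → ℝ} (hg : ConvexOn ℝ univ g) {x y : ℝ} (hxy : x < y) :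
    leftDeriv g x ≤ slope g x y := by
  apply le_of_tendsto ((hasDerivWithinAt_iff_tendsto_slope' (notMem_Iio_self)).mp
    (hg.hasLeftDeriv x))
  filter_upwards [self_mem_nhdsWithin] with t ht
  exact (hg.slope_mono (mem_univ x)) ⟨mem_univ t, ne_of_lt ht⟩
    ⟨mem_univ y, ne_of_gt hxy⟩ (le_of_lt (lt_trans ht hxy))

lemma ConvexOn.leftDeriv_le_rightDeriv {g : ℝ → ℝ} (hg : ConvexOn ℝ univ g) (x : ℝ) :
    leftDeriv g x ≤ rightDeriv g x := by
  apply ge_of_tendsto ((hasDerivWithinAt_iff_tendsto_slope' (notMem_Ioi_self)).mp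
    (hg.hasRightDeriv x))
  filter_upwards [self_mem_nhdsWithin] with t ht
  exact hg.leftDeriv_le_slope' ht

lemma ConvexOn.rightDeriv_le_leftDeriv {g : ℝ → ℝ} (hg : ConvexOn ℝ univ g) {x y : ℝ}
    (hxy : x < y) : rightDeriv g x ≤ leftDeriv g y :=
  le_trans (hg.rightDeriv_le_slope (mem_univ x) (mem_univ y) hxy (hg.diffWithin_Ioi x))
    (hg.slope_le_leftDeriv (mem_univ x) (mem_univ y) hxy (hg.diffWithin_Iio y))

lemma StrictConvexOn.rightDeriv_lt_leftDeriv {g : ℝ → ℝ} (hg : StrictConvexOn ℝ univ g)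
    {x y : ℝ} (hxy : x < y) : rightDeriv g x < leftDeriv g y := by
  set m := (x + y) / 2 with hm
  have hxm : x < m := by simp [hm]; linarith
  have hmy : m < y := by simp [hm]; linarith
  have h1 : rightDeriv g x ≤ slope g x m :=
    hg.convexOn.rightDeriv_le_slope (mem_univ x) (mem_univ m) hxm (hg.convexOn.diffWithin_Ioi x)
  have h2 : slope g x m < slope g m y := by
    rw [slope_def_field, slope_def_field]
    exact hg.slope_strict_mono_adjacent (mem_univ x) (mem_univ y) hxm hmy
  have h3 : slope g m y ≤ leftDeriv g y :=
    hg.convexOn.slope_le_leftDeriv (mem_univ m) (mem_univ y) hmy (hg.convexOn.diffWithin_Iio y)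
  linarith

lemma convexOn_affine_comp {g : ℝ → ℝ} (hg : ConvexOn ℝ univ g) {c : ℝ} (hc : 0 < c) (d : ℝ) :
    ConvexOn ℝ univ (fun t => c * g (t / c + d)) := by
  refine ⟨convex_univ, fun p _ q _ μ ν hμ hν hμν => ?_⟩
  simp only [smul_eq_mul]
  rw [show (μ * p + ν * q) / c + d = μ * (p / c + d) + ν * (q / c + d) by
    field_simp; linear_combination -(d * c) * hμν]
  have := hg.2 (mem_univ (p / c + d)) (mem_univ (q / c + d)) hμ hν hμν
  simp only [smul_eq_mul] at this
  nlinarith [this, hc]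

lemma leftDeriv_affine_comp {g : ℝ → ℝ} {c : ℝ} (hc : 0 < c) (d s : ℝ)
    (hdiff : DifferentiableWithinAt ℝ g (Iio (s / c + d)) (s / c + d)) :
    leftDeriv (fun t => c * g (t / c + d)) s = leftDeriv g (s / c + d) := by
  set u := s / c + d with hu
  have hg : HasDerivWithinAt g (leftDeriv g u) (Iio u) u := hdiff.hasDerivWithinAt
  have hh : HasDerivWithinAt (fun t : ℝ => t / c + d) (1 / c) (Iio s) s := by
    simpa using (((hasDerivAt_id s).div_const c).add_const d).hasDerivWithinAt
  have hmaps : MapsTo (fun t : ℝ => t / c + d) (Iio s) (Iio u) := by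
    intro t ht
    simp only [mem_Iio] at ht ⊢
    show t / c + d < s / c + d
    gcongr
  have hcomp := HasDerivWithinAt.comp s hg hh hmaps
  have hfinal : HasDerivWithinAt (fun t => c * g (t / c + d))
      (c * (leftDeriv g u * (1 / c))) (Iio s) s := hcomp.const_mul c
  have := hfinal.derivWithin (uniqueDiffWithinAt_Iio s)
  rw [leftDeriv, this]
  field_simp

lemma rightDeriv_affine_comp {g : ℝ → ℝ} {c : ℝ} (hc : 0 < c) (d s : ℝ)
    (hdiff : DifferentiableWithinAt ℝ g (Ioi (s / c + d)) (s / c + d)) :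
    rightDeriv (fun t => c * g (t / c + d)) s = rightDeriv g (s / c + d) := by
  set u := s / c + d with hu
  have hg : HasDerivWithinAt g (rightDeriv g u) (Ioi u) u := hdiff.hasDerivWithinAt
  have hh : HasDerivWithinAt (fun t : ℝ => t / c + d) (1 / c) (Ioi s) s := by
    simpa using (((hasDerivAt_id s).div_const c).add_const d).hasDerivWithinAt
  have hmaps : MapsTo (fun t : ℝ => t / c + d) (Ioi s) (Ioi u) := by
    intro t ht
    simp only [mem_Ioi] at ht ⊢
    show s / c + d < t / c + d
    gcongr
  have hcomp := HasDerivWithinAt.comp s hg hh hmaps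
  have hfinal : HasDerivWithinAt (fun t => c * g (t / c + d))
      (c * (rightDeriv g u * (1 / c))) (Ioi s) s := hcomp.const_mul c
  have := hfinal.derivWithin (uniqueDiffWithinAt_Ioi s)
  rw [rightDeriv, this]
  field_simp

theorem strictly_convex_equivalence {n : ℕ} (C : Set (Fin n → ℝ)) (hC : C.Nonempty)
    (hCconv : Convex ℝ C)
    (a b : Fin n → ℝ) (ha : ∀ i, 0 < a i)
    (f fbar : ℝ → ℝ) (hf : ConvexOn ℝ Set.univ f)
    (hfbar : StrictConvexOn ℝ Set.univ fbar)
    -- the exchange optimality condition holds for every separable convex objective over C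
    (hcond : ∀ φ : Fin n → ℝ → ℝ, (∀ i, ConvexOn ℝ Set.univ (φ i)) →
      ∀ x ∈ C, (IsMinOn (fun y => ∑ i, φ i (y i)) C x ↔
        ∀ i k, ExchPair C x i k → leftDeriv (φ i) (x i) ≤ rightDeriv (φ k) (x k)))
    -- the quadratic problem over C has a unique minimizer
    (huniq : ∃! x : Fin n → ℝ, x ∈ C ∧
      IsMinOn (fun y => ∑ i, a i * ((1 : ℝ) / 2 * (y i / a i + b i) ^ 2)) C x)
    (x : Fin n → ℝ) (hx : x ∈ C)
    (hxbar : IsMinOn (fun y => ∑ i, a i * fbar (y i / a i + b i)) C x) :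
    IsMinOn (fun y => ∑ i, a i * f (y i / a i + b i)) C x := by
  have hφbar : ∀ i, ConvexOn ℝ Set.univ (fun t => a i * fbar (t / a i + b i)) :=
    fun i => convexOn_affine_comp hfbar.convexOn (ha i) (b i)
  have hφ : ∀ i, ConvexOn ℝ Set.univ (fun t => a i * f (t / a i + b i)) :=
    fun i => convexOn_affine_comp hf (ha i) (b i)
  have key := (hcond (fun i t => a i * fbar (t / a i + b i)) hφbar x hx).mp hxbar
  refine (hcond (fun i t => a i * f (t / a i + b i)) hφ x hx).mpr ?_
  intro i k hik
  have h1 := key i k hik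
  rw [leftDeriv_affine_comp (ha i) (b i) (x i) (hfbar.convexOn.diffWithin_Iio _),
      rightDeriv_affine_comp (ha k) (b k) (x k) (hfbar.convexOn.diffWithin_Ioi _)] at h1
  rw [leftDeriv_affine_comp (ha i) (b i) (x i) (hf.diffWithin_Iio _),
      rightDeriv_affine_comp (ha k) (b k) (x k) (hf.diffWithin_Ioi _)]
  have hle : x i / a i + b i ≤ x k / a k + b k := by
    by_contra hlt
    push_neg at hlt
    exact absurd h1 (not_le.mpr (hfbar.rightDeriv_lt_leftDeriv hlt))
  rcases eq_or_lt_of_le hle with heq | hlt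
  · rw [heq]; exact hf.leftDeriv_le_rightDeriv _
  · exact le_trans (hf.leftDeriv_le_rightDeriv _)
      (le_trans (hf.rightDeriv_le_leftDeriv hlt) (hf.leftDeriv_le_rightDeriv _))
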